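/- arXiv:2107.00871 — 3 statements merged into one kernel-verified Lean document; each statement's English description precedes it below -/
import Mathlib

section
/- Nonnegativity and identity of indiscernibles for the full-conditional divergence: for positive distributions p and q on X and weights c_i ≥ 0 with Σ_i c_i = 1, FC(p‖q) ≥ 0; moreover, if c_i > 0 for all i, then FC(p‖q) = 0 if and only if p(xᵢ|x₋ᵢ) = q(xᵢ|x₋ᵢ) for every i ∈ ι and every x ∈ X. -/
open Finset

variable {ι : Type} [Fintype ι] [DecidableEq ι] [Nonempty ι]
  {α : ι → Type} [∀ i, Fintype (α i)] [∀ i, DecidableEq (α i)] [∀ i, Nonempty (α i)]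

/-- `p` is a probability distribution on the joint space `X = Π j, α j`. -/
def IsDist (p : (∀ j, α j) → ℝ) : Prop :=
  (∀ x, 0 ≤ p x) ∧ ∑ x, p x = 1

/-- The `i`-marginal `p₋ᵢ(x) = Σ_{a ∈ α i} p(x[i↦a])`. -/
noncomputable def marg (p : (∀ j, α j) → ℝ) (i : ι) (x : ∀ j, α j) : ℝ :=
  ∑ a, p (Function.update x i a)

/-- The full conditional `p(xᵢ|x₋ᵢ) = p(x)/p₋ᵢ(x)`. -/
noncomputable def fullCond (p : (∀ j, α j) → ℝ) (i : ι) (x : ∀ j, α j) : ℝ :=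
  p x / marg p i x

/-- `θ` is a conditional probability table (CPT) at node `i`. -/
def IsCPT (i : ι) (θ : α i → (∀ j, α j) → ℝ) : Prop :=
  (∀ a x, 0 < θ a x) ∧ (∀ x, ∑ a, θ a x = 1) ∧
  (∀ a x (b : α i), θ a (Function.update x i b) = θ a x)

/-- `q` belongs to the full-conditional manifold `E(θ)`. -/
def memE (i : ι) (θ : α i → (∀ j, α j) → ℝ) (q : (∀ j, α j) → ℝ) : Prop :=
  ∀ x, q x = marg q i x * θ (x i) x

/-- Kullback–Leibler divergence. -/
noncomputable def KL (p q : (∀ j, α j) → ℝ) : ℝ :=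
  ∑ x, p x * Real.log (p x / q x)

/-- The full-conditional divergence
`FC(p‖q) = Σ_i c_i·Σ_x p(x)·log( p(xᵢ|x₋ᵢ)/q(xᵢ|x₋ᵢ) )`. -/
noncomputable def FC (c : ι → ℝ) (p q : (∀ j, α j) → ℝ) : ℝ :=
  ∑ i, c i * ∑ x, p x * Real.log (fullCond p i x / fullCond q i x)


section Aux

variable {ι : Type} [Fintype ι] [DecidableEq ι] [Nonempty ι]
  {α : ι → Type} [∀ i, Fintype (α i)] [∀ i, DecidableEq (α i)] [∀ i, Nonempty (α i)]

lemma marg_update (p : (∀ j, α j) → ℝ) (i : ι) (x : ∀ j, α j) (a : α i) :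
    marg p i (Function.update x i a) = marg p i x := by
  unfold marg
  simp [Function.update_idem]

lemma marg_pos (p : (∀ j, α j) → ℝ) (hp : ∀ x, 0 < p x) (i : ι) (x : ∀ j, α j) :
    0 < marg p i x :=
  Finset.sum_pos (fun a _ => hp _) Finset.univ_nonempty

lemma fullCond_pos (p : (∀ j, α j) → ℝ) (hp : ∀ x, 0 < p x) (i : ι) (x : ∀ j, α j) :
    0 < fullCond p i x :=
  div_pos (hp x) (marg_pos p hp i x)

/-- The involution `(x, a) ↦ (x[i↦a], xᵢ)` on `X × α i`. -/
def updEquiv (i : ι) : ((∀ j, α j) × α i) ≃ ((∀ j, α j) × α i) where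
  toFun z := (Function.update z.1 i z.2, z.1 i)
  invFun z := (Function.update z.1 i z.2, z.1 i)
  left_inv z := by
    simp [Prod.ext_iff, Function.update_idem]
  right_inv z := by
    simp [Prod.ext_iff, Function.update_idem]

set_option maxHeartbeats 1000000 in
lemma sum_marg_ratio (p q : (∀ j, α j) → ℝ) (hq : ∀ x, 0 < q x) (i : ι) :
    ∑ x, marg p i x / marg q i x * q x = ∑ x, p x := by
  have hm : ∀ x, (0:ℝ) < marg q i x := marg_pos q hq i
  calc ∑ x, marg p i x / marg q i x * q x
      = ∑ x, ∑ a, p (Function.update x i a) * (q x / marg q i x) := by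
        refine Finset.sum_congr rfl fun x _ => ?_
        rw [← Finset.sum_mul]
        show marg p i x / marg q i x * q x = marg p i x * (q x / marg q i x)
        ring
    _ = ∑ z : (∀ j, α j) × α i, p (Function.update z.1 i z.2) * (q z.1 / marg q i z.1) :=
        (Fintype.sum_prod_type
          (fun z : (∀ j, α j) × α i => p (Function.update z.1 i z.2) * (q z.1 / marg q i z.1))).symm
    _ = ∑ z : (∀ j, α j) × α i,
          p (Function.update (Function.update z.1 i z.2) i (z.1 i)) *
            (q (Function.update z.1 i z.2) / marg q i (Function.update z.1 i z.2)) :=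
        (Equiv.sum_comp (updEquiv i)
          (fun z => p (Function.update z.1 i z.2) * (q z.1 / marg q i z.1))).symm
    _ = ∑ z : (∀ j, α j) × α i, p z.1 * (q (Function.update z.1 i z.2) / marg q i z.1) := by
        refine Finset.sum_congr rfl fun z _ => ?_
        rw [Function.update_idem, Function.update_eq_self, marg_update]
    _ = ∑ x, ∑ a, p x * (q (Function.update x i a) / marg q i x) :=
        Fintype.sum_prod_type
          (fun z : (∀ j, α j) × α i => p z.1 * (q (Function.update z.1 i z.2) / marg q i z.1))
    _ = ∑ x, p x := by
        refine Finset.sum_congr rfl fun x _ => ?_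
        rw [← Finset.mul_sum, ← Finset.sum_div]
        show p x * (marg q i x / marg q i x) = p x
        rw [div_self (ne_of_gt (hm x)), mul_one]

lemma inner_sum_eq (p q : (∀ j, α j) → ℝ) (hp : IsDist p) (hppos : ∀ x, 0 < p x)
    (hqpos : ∀ x, 0 < q x) (i : ι) :
    ∑ x, p x * Real.log (fullCond p i x / fullCond q i x)
      = ∑ x, p x * (fullCond q i x / fullCond p i x - 1
          - Real.log (fullCond q i x / fullCond p i x)) := by
  have hsum1 : ∑ x, p x * (fullCond q i x / fullCond p i x) = 1 := by
    have h : ∑ x, p x * (fullCond q i x / fullCond p i x)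
        = ∑ x, marg p i x / marg q i x * q x := by
      refine Finset.sum_congr rfl fun x _ => ?_
      have h1 : p x ≠ 0 := ne_of_gt (hppos x)
      have h2 : marg p i x ≠ 0 := ne_of_gt (marg_pos p hppos i x)
      have h3 : marg q i x ≠ 0 := ne_of_gt (marg_pos q hqpos i x)
      unfold fullCond
      field_simp
    rw [h, sum_marg_ratio p q hqpos i, hp.2]
  have hlog : ∀ x, Real.log (fullCond p i x / fullCond q i x)
      = - Real.log (fullCond q i x / fullCond p i x) := by
    intro x
    rw [← Real.log_inv, inv_div]
  calc ∑ x, p x * Real.log (fullCond p i x / fullCond q i x)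
      = - ∑ x, p x * Real.log (fullCond q i x / fullCond p i x) := by
        rw [← Finset.sum_neg_distrib]
        refine Finset.sum_congr rfl fun x _ => ?_
        rw [hlog x]; ring
    _ = ∑ x, p x * (fullCond q i x / fullCond p i x - 1
          - Real.log (fullCond q i x / fullCond p i x)) := by
        have hsplit : ∑ x, p x * (fullCond q i x / fullCond p i x - 1
              - Real.log (fullCond q i x / fullCond p i x))
            = (∑ x, p x * (fullCond q i x / fullCond p i x)) - (∑ x, p x)
              - ∑ x, p x * Real.log (fullCond q i x / fullCond p i x) := by
          rw [← Finset.sum_sub_distrib, ← Finset.sum_sub_distrib]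
          refine Finset.sum_congr rfl fun x _ => ?_
          ring
        rw [hsplit, hsum1, hp.2]
        ring

end Aux

/-- nonnegativity and identity of indiscernibles for the
full-conditional divergence. -/
theorem FC_nonneg_and_eq_zero_iff
    (c : ι → ℝ) (hc0 : ∀ i, 0 ≤ c i) (hc1 : ∑ i, c i = 1)
    (p q : (∀ j, α j) → ℝ) (hp : IsDist p) (hppos : ∀ x, 0 < p x)
    (hq : IsDist q) (hqpos : ∀ x, 0 < q x) :
    0 ≤ FC c p q ∧
    ((∀ i, 0 < c i) →
      (FC c p q = 0 ↔ ∀ (i : ι) (x : ∀ j, α j), fullCond p i x = fullCond q i x)) := by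
  have hfcp : ∀ i x, (0:ℝ) < fullCond p i x := fun i x => fullCond_pos p hppos i x
  have hfcq : ∀ i x, (0:ℝ) < fullCond q i x := fun i x => fullCond_pos q hqpos i x
  have htpos : ∀ i x, (0:ℝ) < fullCond q i x / fullCond p i x :=
    fun i x => div_pos (hfcq i x) (hfcp i x)
  have hterm_nonneg : ∀ i x, 0 ≤ p x * (fullCond q i x / fullCond p i x - 1
      - Real.log (fullCond q i x / fullCond p i x)) := by
    intro i x
    have := Real.log_le_sub_one_of_pos (htpos i x)
    have hpx := (hppos x).le
    nlinarith
  have hSnn : ∀ i, 0 ≤ ∑ x, p x * Real.log (fullCond p i x / fullCond q i x) := by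
    intro i
    rw [inner_sum_eq p q hp hppos hqpos i]
    exact Finset.sum_nonneg fun x _ => hterm_nonneg i x
  refine ⟨Finset.sum_nonneg fun i _ => mul_nonneg (hc0 i) (hSnn i), ?_⟩
  intro hcpos
  constructor
  · intro hFC i x
    have hci : c i * (∑ x, p x * Real.log (fullCond p i x / fullCond q i x)) = 0 := by
      have := (Finset.sum_eq_zero_iff_of_nonneg
        (fun i _ => mul_nonneg (hc0 i) (hSnn i))).mp hFC i (Finset.mem_univ i)
      exact this
    have hSi : ∑ x, p x * Real.log (fullCond p i x / fullCond q i x) = 0 :=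
      (mul_eq_zero.mp hci).resolve_left (ne_of_gt (hcpos i))
    rw [inner_sum_eq p q hp hppos hqpos i] at hSi
    have hterm := (Finset.sum_eq_zero_iff_of_nonneg
      (fun x _ => hterm_nonneg i x)).mp hSi x (Finset.mem_univ x)
    have ht : fullCond q i x / fullCond p i x - 1
        - Real.log (fullCond q i x / fullCond p i x) = 0 :=
      (mul_eq_zero.mp hterm).resolve_left (ne_of_gt (hppos x))
    have ht1 : fullCond q i x / fullCond p i x = 1 := by
      by_contra hne
      have := Real.log_lt_sub_one_of_pos (htpos i x) hne
      linarith
    have := (div_eq_one_iff_eq (ne_of_gt (hfcp i x))).mp ht1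
    exact this.symm
  · intro h
    unfold FC
    refine Finset.sum_eq_zero fun i _ => ?_
    rw [mul_eq_zero]
    right
    refine Finset.sum_eq_zero fun x _ => ?_
    rw [h i x, div_self (ne_of_gt (hfcq i x)), Real.log_one, mul_zero]
end

section
/- Theorem 4, optimal CPT: let p be a positive distribution, i ∈ ι, S ⊆ ι with i ∉ S, and define θ̂ by θ̂(a,x) = p(a|x_S) (the conditional probability of Xᵢ = a given X_S = x_S under p). Then θ̂ is a CPT at node i depending only on the coordinates in S, and for every CPT θ at node i whose value θ(a,x) depends only on the coordinates of x in S, Σ_x p(x)·log( p(xᵢ|x₋ᵢ) / θ̂(xᵢ,x) ) ≤ Σ_x p(x)·log( p(xᵢ|x₋ᵢ) / θ(xᵢ,x) ). -/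
open Finset

variable {ι : Type} [Fintype ι] [DecidableEq ι] [Nonempty ι]
  {α : ι → Type} [∀ i, Fintype (α i)] [∀ i, DecidableEq (α i)] [∀ i, Nonempty (α i)]

/-- Restriction of `x` to the coordinates in `S`. -/
def restr (S : Finset ι) (x : ∀ j, α j) : ∀ j : S, α j :=
  fun j => x j

/-- Marginal of `p` on the coordinates in `S`: `p_S(y) = Σ_{x : x_S = y} p(x)`. -/
noncomputable def margS (p : (∀ j, α j) → ℝ) (S : Finset ι) (y : ∀ j : S, α j) : ℝ :=
  ∑ x, if restr S x = y then p x else 0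

/-- A canonical point of the joint space whose `S`-coordinates are `y`. -/
noncomputable def fill (S : Finset ι) (y : ∀ j : S, α j) : ∀ j, α j :=
  fun j => if h : j ∈ S then y ⟨j, h⟩ else Classical.arbitrary (α j)

/-- The conditional entropy
`H_p(Xᵢ|X_S) = −Σ_x p(x)·log( p_{S∪{i}}(x_{S∪{i}}) / p_S(x_S) )`;
`H_p(Xᵢ|X₋ᵢ)` is the case `S = Finset.univ.erase i`. -/
noncomputable def condEnt (p : (∀ j, α j) → ℝ) (i : ι) (S : Finset ι) : ℝ :=
  -∑ x, p x * Real.log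
    (margS p (insert i S) (restr (insert i S) x) / margS p S (restr S x))

/-- The conditional probability `p(a|y) = p_{S∪{i}}(y,a)/p_S(y)` of `Xᵢ = a`
given `X_S = y`, for `i ∉ S`. -/
noncomputable def condP (p : (∀ j, α j) → ℝ) (i : ι) (S : Finset ι)
    (y : ∀ j : S, α j) (a : α i) : ℝ :=
  margS p (insert i S) (restr (insert i S) (Function.update (fill S y) i a)) / margS p S y

/-- The optimal CPT `θ̂(a,x) = p(a|x_S) = p_{S∪{i}}(x_S,a)/p_S(x_S)`. -/
noncomputable def hatCPT (p : (∀ j, α j) → ℝ) (i : ι) (S : Finset ι)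
    (a : α i) (x : ∀ j, α j) : ℝ :=
  margS p (insert i S) (restr (insert i S) (Function.update x i a)) /
    margS p S (restr S x)


set_option linter.unusedSectionVars false in
lemma restr_fill' (S : Finset ι) (y : ∀ j : S, α j) : restr S (fill S y) = y := by
  funext j; exact dif_pos j.2

set_option linter.unusedSectionVars false in
lemma margS_pos {p : (∀ j, α j) → ℝ} (hppos : ∀ x, 0 < p x) (S : Finset ι)
    (y : ∀ j : S, α j) : 0 < margS p S y := by
  refine Finset.sum_pos' (fun x _ => ?_) ⟨fill S y, Finset.mem_univ _, ?_⟩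
  · split_ifs with h
    · exact (hppos x).le
    · exact le_refl 0
  · rw [if_pos (restr_fill' S y)]; exact hppos _

set_option linter.unusedSectionVars false in
lemma restr_update_of_not_mem {i : ι} {S : Finset ι} (hiS : i ∉ S)
    (x : ∀ j, α j) (a : α i) : restr S (Function.update x i a) = restr S x := by
  funext j
  have hne : (j : ι) ≠ i := fun h => hiS (by rw [← h]; exact j.2)
  exact Function.update_of_ne hne _ _

set_option linter.unusedSectionVars false in
lemma restr_insert_update_eq_iff {i : ι} {S : Finset ι} (hiS : i ∉ S)
    (x x' : ∀ j, α j) (a : α i) :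
    restr (insert i S) x' = restr (insert i S) (Function.update x i a) ↔
      (restr S x' = restr S x ∧ x' i = a) := by
  constructor
  · intro h
    refine ⟨funext fun j => ?_, ?_⟩
    · have hj : (j : ι) ∈ insert i S := Finset.mem_insert_of_mem j.2
      have hne : (j : ι) ≠ i := fun hh => hiS (by rw [← hh]; exact j.2)
      have h2 := congrFun h ⟨j, hj⟩
      simp only [restr] at h2
      rw [Function.update_of_ne hne] at h2
      exact h2
    · have := congrFun h ⟨i, Finset.mem_insert_self i S⟩
      simpa [restr] using this
  · rintro ⟨h1, h2⟩
    funext j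
    rcases Finset.mem_insert.1 j.2 with hj | hj
    · simp only [restr]
      rw [hj, h2, Function.update_self]
    · simp only [restr]
      rw [Function.update_of_ne (fun hh => hiS (by rw [← hh]; exact hj))]
      exact congrFun h1 ⟨j, hj⟩

set_option linter.unusedSectionVars false in
lemma count_fiber (S : Finset ι) (y : ∀ j : S, α j) :
    ∑ x : (∀ j, α j), (if y = restr S x then (1:ℝ) else 0) =
      ∏ j ∈ Sᶜ, (Fintype.card (α j) : ℝ) := by
  classical
  have e : {x : ∀ j, α j // restr S x = y} ≃ (∀ j : {j : ι // j ∉ S}, α j) :=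
    { toFun := fun x j => x.1 j.1
      invFun := fun g => ⟨fun j => if h : j ∈ S then y ⟨j, h⟩ else g ⟨j, h⟩,
        funext fun j => dif_pos j.2⟩
      left_inv := fun x => Subtype.ext (funext fun j => by
        by_cases h : j ∈ S
        · simp only [dif_pos h]
          exact (congrFun x.2 ⟨j, h⟩).symm
        · simp only [dif_neg h])
      right_inv := fun g => funext fun j => dif_neg j.2 }
  have hcard : (Finset.univ.filter (fun x : ∀ j, α j => y = restr S x)).card =
      ∏ j ∈ Sᶜ, Fintype.card (α j) := by
    have h1 : (Finset.univ.filter (fun x : ∀ j, α j => y = restr S x)).card =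
        Fintype.card {x : ∀ j, α j // restr S x = y} := by
      rw [Fintype.card_subtype]
      congr 1
      apply Finset.filter_congr
      intro x _
      simp [eq_comm]
    rw [h1, Fintype.card_congr e, Fintype.card_pi]
    exact (Finset.prod_subtype Sᶜ (fun j => by simp) (fun j => Fintype.card (α j))).symm
  rw [Finset.sum_boole, hcard]
  push_cast
  ring

set_option linter.unusedSectionVars false in
lemma sum_margS_mul (p : (∀ j, α j) → ℝ) (S : Finset ι) (G : (∀ j, α j) → ℝ)
    (hG : ∀ x x', restr S x = restr S x' → G x = G x') :
    ∑ x, margS p S (restr S x) * G x =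
      (∏ j ∈ Sᶜ, (Fintype.card (α j) : ℝ)) * ∑ x, p x * G x := by
  have step : ∀ x' : (∀ j, α j),
      ∑ x, (if restr S x' = restr S x then p x' else 0) * G x =
        (∏ j ∈ Sᶜ, (Fintype.card (α j) : ℝ)) * (p x' * G x') := by
    intro x'
    have : ∀ x, (if restr S x' = restr S x then p x' else 0) * G x =
        (p x' * G x') * (if restr S x' = restr S x then (1:ℝ) else 0) := by
      intro x
      split_ifs with h
      · rw [hG x' x h]; ring
      · ring
    rw [Finset.sum_congr rfl (fun x _ => this x), ← Finset.mul_sum,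
      count_fiber S (restr S x'), mul_comm]
  calc ∑ x, margS p S (restr S x) * G x
      = ∑ x, ∑ x', (if restr S x' = restr S x then p x' else 0) * G x := by
        simp only [margS, Finset.sum_mul]
    _ = ∑ x', ∑ x, (if restr S x' = restr S x then p x' else 0) * G x :=
        Finset.sum_comm
    _ = ∑ x', (∏ j ∈ Sᶜ, (Fintype.card (α j) : ℝ)) * (p x' * G x') :=
        Finset.sum_congr rfl (fun x' _ => step x')
    _ = _ := by rw [← Finset.mul_sum]

set_option linter.unusedSectionVars false in
lemma sum_sum_update (i : ι) (f : (∀ j, α j) → ℝ) :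
    ∑ x, ∑ a, f (Function.update x i a) = (Fintype.card (α i) : ℝ) * ∑ x, f x := by
  classical
  have key : ∑ q : (∀ j, α j) × α i, f (Function.update q.1 i q.2) =
      ∑ q : (∀ j, α j) × α i, f q.1 := by
    apply Fintype.sum_bijective (fun q : (∀ j, α j) × α i =>
      (Function.update q.1 i q.2, q.1 i))
    · apply Function.Involutive.bijective
      intro q
      simp [Function.update_idem, Function.update_eq_self]
    · intro q
      rfl
  have h1 : ∑ x, ∑ a, f (Function.update x i a) =
      ∑ q : (∀ j, α j) × α i, f (Function.update q.1 i q.2) :=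
    (Fintype.sum_prod_type (fun q => f (Function.update q.1 i q.2))).symm
  have h2 : ∑ q : (∀ j, α j) × α i, f q.1 = ∑ x, ∑ _a : α i, f x :=
    Fintype.sum_prod_type (fun q => f q.1)
  rw [h1, key, h2]
  simp [Finset.sum_const, nsmul_eq_mul, Finset.mul_sum, mul_comm]

set_option linter.unusedSectionVars false in
lemma sum_hat_marg {p : (∀ j, α j) → ℝ} {i : ι} {S : Finset ι} (hiS : i ∉ S)
    (x : ∀ j, α j) :
    ∑ a, margS p (insert i S) (restr (insert i S) (Function.update x i a)) =
      margS p S (restr S x) := by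
  unfold margS
  rw [Finset.sum_comm]
  refine Finset.sum_congr rfl fun x' _ => ?_
  simp only [restr_insert_update_eq_iff hiS]
  by_cases h : restr S x' = restr S x
  · simp [h]
  · simp [h]

/-- Theorem 4, optimality of `θ̂`: `θ̂(a,x) = p(a|x_S)` is a CPT
at node `i` depending only on the coordinates in `S`, and it minimizes
`Σ_x p(x)·log( p(xᵢ|x₋ᵢ)/θ(xᵢ,x) )` among all CPTs at node `i` depending only on
the coordinates in `S`. -/
theorem optimal_CPT
    (p : (∀ j, α j) → ℝ) (hp : IsDist p) (hppos : ∀ x, 0 < p x)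
    (i : ι) (S : Finset ι) (hiS : i ∉ S) :
    IsCPT i (hatCPT p i S) ∧
    (∀ a x x', restr S x = restr S x' → hatCPT p i S a x = hatCPT p i S a x') ∧
    (∀ θ : α i → (∀ j, α j) → ℝ, IsCPT i θ →
      (∀ a x x', restr S x = restr S x' → θ a x = θ a x') →
      ∑ x, p x * Real.log (fullCond p i x / hatCPT p i S (x i) x) ≤
        ∑ x, p x * Real.log (fullCond p i x / θ (x i) x)) := by
  classical
  have hmS : ∀ y, 0 < margS p S y := margS_pos hppos S
  have hmT : ∀ y, 0 < margS p (insert i S) y := margS_pos hppos _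
  have hCPT : IsCPT i (hatCPT p i S) := by
    refine ⟨fun a x => div_pos (hmT _) (hmS _), fun x => ?_, fun a x b => ?_⟩
    · unfold hatCPT
      rw [← Finset.sum_div, sum_hat_marg hiS x, div_self (hmS _).ne']
    · unfold hatCPT
      rw [Function.update_idem, restr_update_of_not_mem hiS]
  have hdep : ∀ a x x', restr S x = restr S x' →
      hatCPT p i S a x = hatCPT p i S a x' := by
    intro a x x' h
    unfold hatCPT
    have hnum : restr (insert i S) (Function.update x i a) =
        restr (insert i S) (Function.update x' i a) :=
      (restr_insert_update_eq_iff hiS x' (Function.update x i a) a).2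
        ⟨by rw [restr_update_of_not_mem hiS, h], Function.update_self _ _ _⟩
    rw [hnum, h]
  refine ⟨hCPT, hdep, ?_⟩
  intro θ hθ hθS
  set T : Finset ι := insert i S with hT
  set G : (∀ j, α j) → ℝ :=
    fun x => θ (x i) x * margS p S (restr S x) / margS p T (restr T x) with hGdef
  have hGpos : ∀ x, 0 < G x :=
    fun x => div_pos (mul_pos (hθ.1 _ _) (hmS _)) (hmT _)
  have hG : ∀ x x', restr T x = restr T x' → G x = G x' := by
    intro x x' h
    have hxi : x i = x' i := congrFun h ⟨i, Finset.mem_insert_self i S⟩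
    have hS : restr S x = restr S x' :=
      funext fun j => congrFun h ⟨j, Finset.mem_insert_of_mem j.2⟩
    simp only [hGdef]
    rw [hS, h, hxi, hθS (x' i) x x' hS]
  have hMpos : 0 < ∏ j ∈ Tᶜ, (Fintype.card (α j) : ℝ) :=
    Finset.prod_pos (fun j _ => by exact_mod_cast Fintype.card_pos)
  have hcpos : (0:ℝ) < Fintype.card (α i) := by exact_mod_cast Fintype.card_pos
  have hA1 : ∑ x, θ (x i) x * margS p S (restr S x) =
      (∏ j ∈ Tᶜ, (Fintype.card (α j) : ℝ)) * ∑ x, p x * G x := by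
    rw [← sum_margS_mul p T G hG]
    refine Finset.sum_congr rfl fun x _ => ?_
    simp only [hGdef]
    have h0 := (hmT (restr T x)).ne'
    field_simp
  have hB : (Fintype.card (α i) : ℝ) * ∑ x, θ (x i) x * margS p S (restr S x) =
      ∑ x, margS p S (restr S x) := by
    rw [← sum_sum_update i (fun x => θ (x i) x * margS p S (restr S x))]
    refine Finset.sum_congr rfl fun x _ => ?_
    have hterm : ∀ a, θ ((Function.update x i a) i) (Function.update x i a) *
        margS p S (restr S (Function.update x i a)) =
        θ a x * margS p S (restr S x) := by
      intro a
      rw [Function.update_self, hθ.2.2 a x a, restr_update_of_not_mem hiS]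
    rw [Finset.sum_congr rfl (fun a _ => hterm a), ← Finset.sum_mul, hθ.2.1 x,
      one_mul]
  have hA2 : ∑ x, margS p S (restr S x) = ∏ j ∈ Sᶜ, (Fintype.card (α j) : ℝ) := by
    have h := sum_margS_mul p S (fun _ => 1) (fun _ _ _ => rfl)
    simpa [hp.2] using h
  have hprod : (∏ j ∈ Sᶜ, (Fintype.card (α j) : ℝ)) =
      (Fintype.card (α i) : ℝ) * ∏ j ∈ Tᶜ, (Fintype.card (α j) : ℝ) := by
    have hic : i ∈ Sᶜ := Finset.mem_compl.2 hiS
    rw [hT, Finset.compl_insert, ← Finset.mul_prod_erase Sᶜ _ hic]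
  have hkey : ∑ x, p x * G x = 1 := by
    have hchain : (Fintype.card (α i) : ℝ) *
        ((∏ j ∈ Tᶜ, (Fintype.card (α j) : ℝ)) * ∑ x, p x * G x) =
        (Fintype.card (α i) : ℝ) * ((∏ j ∈ Tᶜ, (Fintype.card (α j) : ℝ)) * 1) := by
      rw [mul_one, ← hA1, hB, hA2, hprod]
    have h1 := mul_left_cancel₀ hcpos.ne' hchain
    exact mul_left_cancel₀ hMpos.ne' h1
  have hmarg : ∀ x, 0 < marg p i x :=
    fun x => Finset.sum_pos (fun a _ => hppos _) Finset.univ_nonempty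
  have hfc : ∀ x, fullCond p i x ≠ 0 :=
    fun x => (div_pos (hppos x) (hmarg x)).ne'
  have hhat_eq : ∀ x, hatCPT p i S (x i) x =
      margS p T (restr T x) / margS p S (restr S x) := by
    intro x; unfold hatCPT; rw [Function.update_eq_self]
  have hsplit : ∀ x, Real.log (fullCond p i x / hatCPT p i S (x i) x) =
      Real.log (fullCond p i x / θ (x i) x) + Real.log (G x) := by
    intro x
    have hθne := (hθ.1 (x i) x).ne'
    have hhatpos : 0 < hatCPT p i S (x i) x := hCPT.1 _ _
    rw [Real.log_div (hfc x) hhatpos.ne', Real.log_div (hfc x) hθne]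
    have hGlog : Real.log (G x) =
        Real.log (θ (x i) x) - Real.log (hatCPT p i S (x i) x) := by
      simp only [hGdef]
      rw [hhat_eq x, Real.log_div (mul_pos (hθ.1 _ _) (hmS _)).ne' (hmT _).ne',
        Real.log_mul hθne (hmS _).ne', Real.log_div (hmT _).ne' (hmS _).ne']
      ring
    rw [hGlog]; ring
  have hLHS : ∑ x, p x * Real.log (fullCond p i x / hatCPT p i S (x i) x) =
      (∑ x, p x * Real.log (fullCond p i x / θ (x i) x)) +
        ∑ x, p x * Real.log (G x) := by
    rw [← Finset.sum_add_distrib]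
    refine Finset.sum_congr rfl fun x _ => ?_
    rw [hsplit x]; ring
  have hlog : ∑ x, p x * Real.log (G x) ≤ 0 := by
    have hle : ∀ x, p x * Real.log (G x) ≤ p x * G x - p x := by
      intro x
      calc p x * Real.log (G x) ≤ p x * (G x - 1) :=
            mul_le_mul_of_nonneg_left (Real.log_le_sub_one_of_pos (hGpos x))
              (hppos x).le
        _ = p x * G x - p x := by ring
    calc ∑ x, p x * Real.log (G x) ≤ ∑ x, (p x * G x - p x) :=
          Finset.sum_le_sum (fun x _ => hle x)
      _ = (∑ x, p x * G x) - ∑ x, p x := Finset.sum_sub_distrib _ _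
      _ = 0 := by rw [hkey, hp.2]; ring
  rw [hLHS]
  linarith
end

section
/- Theorem 6 (convergence to the true distribution, identifiability form): let c_i > 0 for all i ∈ ι with Σ_i c_i = 1. Let p* be a positive distribution, (p_N) a sequence of positive distributions with p_N(x) → p*(x) for every x, and (q_N) a sequence of positive distributions with FC(p_N‖q_N) → 0. Then q_N(x) → p*(x) for every x ∈ X. -/
open Finset

variable {ι : Type} [Fintype ι] [DecidableEq ι] [Nonempty ι]
  {α : ι → Type} [∀ i, Fintype (α i)] [∀ i, DecidableEq (α i)] [∀ i, Nonempty (α i)]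

section Aux

set_option linter.unusedSectionVars false
set_option linter.unusedVariables false

lemma my_marg_pos {p : (∀ j, α j) → ℝ} (hp : ∀ x, 0 < p x) (i : ι) (x : ∀ j, α j) :
    0 < marg p i x :=
  Finset.sum_pos (fun a _ => hp _) Finset.univ_nonempty

lemma my_marg_update (p : (∀ j, α j) → ℝ) (i : ι) (x : ∀ j, α j) (b : α i) :
    marg p i (Function.update x i b) = marg p i x := by
  unfold marg
  exact Finset.sum_congr rfl fun a _ => by rw [Function.update_idem]

lemma my_update_symm (i : ι) (a b : α i) (y : (j : { j // j ≠ i }) → α j.1) :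
    Function.update ((Equiv.piSplitAt i α).symm (a, y)) i b = (Equiv.piSplitAt i α).symm (b, y) := by
  funext j
  by_cases h : j = i
  · subst h; simp [Equiv.piSplitAt_symm_apply]
  · simp [Equiv.piSplitAt_symm_apply, Function.update_of_ne h, h]

lemma my_marg_symm (i : ι) (f : (∀ j, α j) → ℝ) (a : α i) (y : (j : { j // j ≠ i }) → α j.1) :
    marg f i ((Equiv.piSplitAt i α).symm (a, y)) = ∑ b, f ((Equiv.piSplitAt i α).symm (b, y)) := by
  unfold marg
  exact Finset.sum_congr rfl fun b _ => by rw [my_update_symm]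

lemma my_sum_split (i : ι) (f : (∀ j, α j) → ℝ) :
    ∑ x, f x = ∑ y, ∑ a, f ((Equiv.piSplitAt i α).symm (a, y)) := by
  rw [← Equiv.sum_comp (Equiv.piSplitAt i α).symm f, Fintype.sum_prod_type, Finset.sum_comm]

/-- The "fiberwise tilted" distribution `Q_i(x) = q(xᵢ|x₋ᵢ)·p₋ᵢ(x)` sums to one. -/
lemma my_sum_Q (i : ι) {p q : (∀ j, α j) → ℝ} (hp1 : ∑ x, p x = 1) (hq : ∀ x, 0 < q x) :
    ∑ x, fullCond q i x * marg p i x = 1 := by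
  rw [my_sum_split i]
  have key : ∀ y, ∑ a, fullCond q i ((Equiv.piSplitAt i α).symm (a, y)) *
      marg p i ((Equiv.piSplitAt i α).symm (a, y))
      = ∑ b, p ((Equiv.piSplitAt i α).symm (b, y)) := by
    intro y
    have hqm : (0:ℝ) < ∑ b, q ((Equiv.piSplitAt i α).symm (b, y)) :=
      Finset.sum_pos (fun b _ => hq _) Finset.univ_nonempty
    calc ∑ a, fullCond q i ((Equiv.piSplitAt i α).symm (a, y)) *
          marg p i ((Equiv.piSplitAt i α).symm (a, y))
        = ∑ a, q ((Equiv.piSplitAt i α).symm (a, y)) / (∑ b, q ((Equiv.piSplitAt i α).symm (b, y)))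
            * (∑ b, p ((Equiv.piSplitAt i α).symm (b, y))) := by
          refine Finset.sum_congr rfl fun a _ => ?_
          rw [fullCond, my_marg_symm, my_marg_symm]
      _ = (∑ a, q ((Equiv.piSplitAt i α).symm (a, y))) / (∑ b, q ((Equiv.piSplitAt i α).symm (b, y)))
            * (∑ b, p ((Equiv.piSplitAt i α).symm (b, y))) := by
          rw [← Finset.sum_mul, ← Finset.sum_div]
      _ = ∑ b, p ((Equiv.piSplitAt i α).symm (b, y)) := by rw [div_self hqm.ne', one_mul]
  rw [Finset.sum_congr rfl fun y _ => key y, ← my_sum_split i, hp1]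

lemma my_key_ineq {u v : ℝ} (hu : 0 < u) (hv : 0 < v) :
    (Real.sqrt u - Real.sqrt v)^2 ≤ u * Real.log (u / v) - u + v := by
  have hsu := Real.sqrt_pos.mpr hu
  have hsv := Real.sqrt_pos.mpr hv
  have h1 : Real.log (Real.sqrt v / Real.sqrt u) ≤ Real.sqrt v / Real.sqrt u - 1 :=
    Real.log_le_sub_one_of_pos (by positivity)
  have h2 : Real.log (u / v) = 2 * (Real.log (Real.sqrt u) - Real.log (Real.sqrt v)) := by
    rw [Real.log_div hu.ne' hv.ne', Real.log_sqrt hu.le, Real.log_sqrt hv.le]; ring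
  have h3 : Real.log (Real.sqrt v / Real.sqrt u) = Real.log (Real.sqrt v) - Real.log (Real.sqrt u) :=
    Real.log_div hsv.ne' hsu.ne'
  have h4 : 2 * (1 - Real.sqrt v / Real.sqrt u) ≤ Real.log (u / v) := by
    rw [h2]; linarith
  have h5 : u * (2 * (1 - Real.sqrt v / Real.sqrt u)) ≤ u * Real.log (u / v) :=
    mul_le_mul_of_nonneg_left h4 hu.le
  have hu' : Real.sqrt u ^ 2 = u := Real.sq_sqrt hu.le
  have hv' : Real.sqrt v ^ 2 = v := Real.sq_sqrt hv.le
  have h6 : u * (2 * (1 - Real.sqrt v / Real.sqrt u)) = 2*u - 2*Real.sqrt u * Real.sqrt v := by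
    field_simp; nlinarith [hu']
  nlinarith [h5, h6, hu', hv']

lemma my_fc_pos {q : (∀ j, α j) → ℝ} (hq : ∀ x, 0 < q x) (i : ι) (x : ∀ j, α j) :
    0 < fullCond q i x :=
  div_pos (hq x) (my_marg_pos hq i x)

/-- Pointwise square bound on the per-node divergence. -/
lemma my_bound (i : ι) {p q : (∀ j, α j) → ℝ} (hp : ∀ x, 0 < p x) (hq : ∀ x, 0 < q x)
    (hp1 : ∑ x, p x = 1) (x0 : ∀ j, α j) :
    (Real.sqrt (p x0) - Real.sqrt (fullCond q i x0 * marg p i x0))^2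
      ≤ ∑ x, p x * Real.log (fullCond p i x / fullCond q i x) := by
  set Q : (∀ j, α j) → ℝ := fun x => fullCond q i x * marg p i x with hQdef
  have hQpos : ∀ x, 0 < Q x := fun x => mul_pos (my_fc_pos hq i x) (my_marg_pos hp i x)
  have hratio : ∀ x, fullCond p i x / fullCond q i x = p x / Q x := by
    intro x
    have h1 := (my_marg_pos hp i x).ne'
    have h2 := (my_fc_pos hq i x).ne'
    simp only [hQdef]
    rw [fullCond, div_div, mul_comm]
  have hfle : ∀ x, (Real.sqrt (p x) - Real.sqrt (Q x))^2
      ≤ p x * Real.log (fullCond p i x / fullCond q i x) - p x + Q x := by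
    intro x
    rw [hratio x]
    exact my_key_ineq (hp x) (hQpos x)
  have hsum : ∑ x, (p x * Real.log (fullCond p i x / fullCond q i x) - p x + Q x)
      = ∑ x, p x * Real.log (fullCond p i x / fullCond q i x) := by
    rw [Finset.sum_add_distrib, Finset.sum_sub_distrib, hp1, my_sum_Q i hp1 hq]
    ring
  have h1 : (Real.sqrt (p x0) - Real.sqrt (Q x0))^2
      ≤ ∑ x, (p x * Real.log (fullCond p i x / fullCond q i x) - p x + Q x) :=
    le_trans (hfle x0)
      (Finset.single_le_sum (fun x _ => le_trans (sq_nonneg _) (hfle x)) (Finset.mem_univ x0))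
  rwa [hsum] at h1

/-- Identifiability: a distribution whose `i`-conditionals agree with those of a
positive distribution `pstar` must equal `pstar`. -/
lemma my_ident {pstar Q : (∀ j, α j) → ℝ} (hps : ∀ x, 0 < pstar x)
    (hps1 : ∑ x, pstar x = 1) (hQ1 : ∑ x, Q x = 1)
    (hrel : ∀ i x, Q x = fullCond pstar i x * marg Q i x) :
    ∀ x, Q x = pstar x := by
  have ratio : ∀ (i : ι) (x : ∀ j, α j) (b : α i),
      Q x * pstar (Function.update x i b) = pstar x * Q (Function.update x i b) := by
    intro i x b
    have hmQ : marg Q i (Function.update x i b) = marg Q i x := my_marg_update Q i x b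
    have hmp : marg pstar i (Function.update x i b) = marg pstar i x := my_marg_update pstar i x b
    have h1 := hrel i x
    have h2 := hrel i (Function.update x i b)
    rw [fullCond] at h1 h2
    rw [hmQ, hmp] at h2
    have hM : marg pstar i x ≠ 0 := (my_marg_pos hps i x).ne'
    rw [h1, h2]
    field_simp
  have chain : ∀ (s : Finset ι) (x y : ∀ j, α j), (∀ j, j ∉ s → x j = y j) →
      Q x * pstar y = pstar x * Q y := by
    intro s
    induction s using Finset.induction_on with
    | empty =>
      intro x y h
      have : x = y := funext fun j => h j (Finset.notMem_empty j)
      rw [this]; ring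
    | @insert i s hni ih =>
      intro x y hxy
      set x' := Function.update x i (y i) with hx'def
      have h1 : Q x * pstar x' = pstar x * Q x' := ratio i x (y i)
      have h2 : Q x' * pstar y = pstar x' * Q y := by
        apply ih
        intro j hj
        by_cases hji : j = i
        · subst hji; rw [hx'def, Function.update_self]
        · rw [hx'def, Function.update_of_ne hji]
          exact hxy j (by simp [hji, hj])
      have hx' : pstar x' ≠ 0 := (hps x').ne'
      apply mul_right_cancel₀ hx'
      calc Q x * pstar y * pstar x' = (Q x * pstar x') * pstar y := by ring
        _ = (pstar x * Q x') * pstar y := by rw [h1]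
        _ = pstar x * (Q x' * pstar y) := by ring
        _ = pstar x * (pstar x' * Q y) := by rw [h2]
        _ = pstar x * Q y * pstar x' := by ring
  intro y
  have h : ∀ x, Q x * pstar y = pstar x * Q y :=
    fun x => chain Finset.univ x y (fun j hj => absurd (Finset.mem_univ j) hj)
  have hs : ∑ x, Q x * pstar y = ∑ x, pstar x * Q y := Finset.sum_congr rfl fun x _ => h x
  rw [← Finset.sum_mul, ← Finset.sum_mul, hQ1, hps1, one_mul, one_mul] at hs
  exact hs.symm

end Aux

/-- Theorem 6, identifiability form: if `p_N → p*` pointwise and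
`FC(p_N‖q_N) → 0` with all weights positive, then `q_N → p*` pointwise. -/
theorem convergence_to_true_distribution
    (c : ι → ℝ) (hc0 : ∀ i, 0 < c i) (hc1 : ∑ i, c i = 1)
    (pstar : (∀ j, α j) → ℝ) (hpstar : IsDist pstar) (hpstarpos : ∀ x, 0 < pstar x)
    (p : ℕ → (∀ j, α j) → ℝ) (hp : ∀ N, IsDist (p N)) (hppos : ∀ N x, 0 < p N x)
    (q : ℕ → (∀ j, α j) → ℝ) (hq : ∀ N, IsDist (q N)) (hqpos : ∀ N x, 0 < q N x)
    (hplim : ∀ x, Filter.Tendsto (fun N => p N x) Filter.atTop (nhds (pstar x)))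
    (hFClim : Filter.Tendsto (fun N => FC c (p N) (q N)) Filter.atTop (nhds 0)) :
    ∀ x, Filter.Tendsto (fun N => q N x) Filter.atTop (nhds (pstar x)) := by
  classical
  set S : ι → ℕ → ℝ :=
    fun i N => ∑ x, p N x * Real.log (fullCond (p N) i x / fullCond (q N) i x) with hSdef
  have hSnn : ∀ i N, 0 ≤ S i N := by
    intro i N
    exact le_trans (sq_nonneg _)
      (my_bound i (hppos N) (hqpos N) (hp N).2 (Classical.arbitrary _))
  -- Step 1: each per-node divergence tends to 0
  have hS0 : ∀ i, Filter.Tendsto (fun N => S i N) Filter.atTop (nhds 0) := by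
    intro i
    have h1 : ∀ N, c i * S i N ≤ FC c (p N) (q N) := by
      intro N
      exact Finset.single_le_sum (f := fun j => c j * S j N)
        (fun j _ => mul_nonneg (hc0 j).le (hSnn j N)) (Finset.mem_univ i)
    have h2 : Filter.Tendsto (fun N => c i * S i N) Filter.atTop (nhds 0) :=
      squeeze_zero (fun N => mul_nonneg (hc0 i).le (hSnn i N)) h1 hFClim
    have h3 := h2.const_mul (c i)⁻¹
    simp only [mul_zero] at h3
    have h4 : (fun N => (c i)⁻¹ * (c i * S i N)) = fun N => S i N := by
      funext N
      rw [← mul_assoc, inv_mul_cancel₀ (hc0 i).ne', one_mul]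
    rwa [h4] at h3
  -- Step 2: tilted distributions converge pointwise to pstar
  have hmargp : ∀ (i : ι) (z : ∀ j, α j),
      Filter.Tendsto (fun N => marg (p N) i z) Filter.atTop (nhds (marg pstar i z)) := by
    intro i z
    exact tendsto_finset_sum _ fun a _ => hplim (Function.update z i a)
  have hQlim : ∀ (i : ι) (z : ∀ j, α j),
      Filter.Tendsto (fun N => fullCond (q N) i z * marg (p N) i z) Filter.atTop
        (nhds (pstar z)) := by
    intro i z
    have hb : ∀ N, (Real.sqrt (p N z) - Real.sqrt (fullCond (q N) i z * marg (p N) i z))^2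
        ≤ S i N := fun N => my_bound i (hppos N) (hqpos N) (hp N).2 z
    have h0 : Filter.Tendsto
        (fun N => (Real.sqrt (p N z) - Real.sqrt (fullCond (q N) i z * marg (p N) i z))^2)
        Filter.atTop (nhds 0) :=
      squeeze_zero (fun N => sq_nonneg _) hb (hS0 i)
    have habs : Filter.Tendsto
        (fun N => |Real.sqrt (p N z) - Real.sqrt (fullCond (q N) i z * marg (p N) i z)|)
        Filter.atTop (nhds 0) := by
      have := (Real.continuous_sqrt.tendsto 0).comp h0
      simpa [Function.comp_def, Real.sqrt_sq_eq_abs] using this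
    have hd : Filter.Tendsto
        (fun N => Real.sqrt (p N z) - Real.sqrt (fullCond (q N) i z * marg (p N) i z))
        Filter.atTop (nhds 0) := by
      have hneg := habs.neg
      rw [neg_zero] at hneg
      exact tendsto_of_tendsto_of_tendsto_of_le_of_le hneg habs
        (fun n => neg_abs_le _) (fun n => le_abs_self _)
    have hsp : Filter.Tendsto (fun N => Real.sqrt (p N z)) Filter.atTop
        (nhds (Real.sqrt (pstar z))) :=
      (Real.continuous_sqrt.tendsto _).comp (hplim z)
    have hsq : Filter.Tendsto (fun N => Real.sqrt (fullCond (q N) i z * marg (p N) i z))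
        Filter.atTop (nhds (Real.sqrt (pstar z))) := by
      have := hsp.sub hd
      simpa using this
    have hsq2 : Filter.Tendsto (fun N => Real.sqrt (fullCond (q N) i z * marg (p N) i z) ^ 2)
        Filter.atTop (nhds (Real.sqrt (pstar z) ^ 2)) := hsq.pow 2
    have heq : (fun N => Real.sqrt (fullCond (q N) i z * marg (p N) i z) ^ 2)
        = fun N => fullCond (q N) i z * marg (p N) i z := by
      funext N
      exact Real.sq_sqrt (mul_pos (my_fc_pos (hqpos N) i z) (my_marg_pos (hppos N) i z)).le
    rw [heq, Real.sq_sqrt (hpstarpos z).le] at hsq2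
    exact hsq2
  -- Step 3: full conditionals of q_N converge to those of pstar
  have hfclim : ∀ (i : ι) (z : ∀ j, α j),
      Filter.Tendsto (fun N => fullCond (q N) i z) Filter.atTop
        (nhds (fullCond pstar i z)) := by
    intro i z
    have h := Filter.Tendsto.div (hQlim i z) (hmargp i z) (my_marg_pos hpstarpos i z).ne'
    have heq : (fun N => fullCond (q N) i z * marg (p N) i z) / (fun N => marg (p N) i z)
        = fun N => fullCond (q N) i z := by
      funext N
      exact mul_div_cancel_right₀ _ (my_marg_pos (hppos N) i z).ne'
    rw [heq] at h
    exact h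
  -- Step 4: subsequence compactness argument
  intro x0
  apply Filter.tendsto_of_subseq_tendsto
  intro ns hns
  have hmem : ∀ k, q (ns k) ∈ Set.Icc (0 : (∀ j, α j) → ℝ) 1 := by
    intro k
    constructor
    · intro z
      exact (hqpos _ z).le
    · intro z
      calc q (ns k) z ≤ ∑ x, q (ns k) x :=
            Finset.single_le_sum (fun x _ => (hq _).1 x) (Finset.mem_univ z)
        _ = 1 := (hq _).2
  obtain ⟨Qs, hQsmem, φ, hφ, hconv⟩ := isCompact_Icc.tendsto_subseq hmem
  have hpt : ∀ z, Filter.Tendsto (fun k => q (ns (φ k)) z) Filter.atTop (nhds (Qs z)) :=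
    fun z => tendsto_pi_nhds.mp hconv z
  have hnsφ : Filter.Tendsto (fun k => ns (φ k)) Filter.atTop Filter.atTop :=
    hns.comp hφ.tendsto_atTop
  have hQs1 : ∑ x, Qs x = 1 := by
    have h1 : Filter.Tendsto (fun k => ∑ x, q (ns (φ k)) x) Filter.atTop (nhds (∑ x, Qs x)) :=
      tendsto_finset_sum _ fun x _ => hpt x
    have h2 : Filter.Tendsto (fun k => ∑ x, q (ns (φ k)) x) Filter.atTop (nhds 1) := by
      have : (fun k => ∑ x, q (ns (φ k)) x) = fun _ => (1:ℝ) := funext fun k => (hq _).2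
      rw [this]; exact tendsto_const_nhds
    exact tendsto_nhds_unique h1 h2
  have hrel : ∀ (i : ι) (z : ∀ j, α j), Qs z = fullCond pstar i z * marg Qs i z := by
    intro i z
    have h2 : Filter.Tendsto
        (fun k => fullCond (q (ns (φ k))) i z * marg (q (ns (φ k))) i z) Filter.atTop
        (nhds (fullCond pstar i z * marg Qs i z)) :=
      (((hfclim i z).comp hnsφ)).mul
        (tendsto_finset_sum _ fun a _ => hpt (Function.update z i a))
    have heq : (fun k => fullCond (q (ns (φ k))) i z * marg (q (ns (φ k))) i z)
        = fun k => q (ns (φ k)) z := by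
      funext k
      rw [fullCond]
      exact div_mul_cancel₀ _ (my_marg_pos (hqpos _) i z).ne'
    rw [heq] at h2
    exact tendsto_nhds_unique (hpt z) h2
  have hident : ∀ z, Qs z = pstar z :=
    my_ident hpstarpos hpstar.2 hQs1 hrel
  refine ⟨φ, ?_⟩
  have := hpt x0
  rwa [hident x0] at this
end
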